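/- arXiv:1806.03022 — 3 statements merged into one kernel-verified Lean document; each statement's English description precedes it below -/
import Mathlib

section
/- For every positive integer n: ∑_{k=1}^{n} ((-1)^{k-1}/k) · binom(n, k) · H_{n−k} = H_n^2 + ∑_{k=1}^{n} (-1)^k / (k^2 · binom(n, k)), as an identity of rational numbers. -/
open Finset

/-- The `n`-th harmonic number as a rational number. -/
def Hq (n : ℕ) : ℚ := ∑ i ∈ Finset.range n, 1 / (i + 1)

/-- The `n`-th generalized harmonic number of order 2 as a rational number. -/
def H2q (n : ℕ) : ℚ := ∑ i ∈ Finset.range n, 1 / ((i : ℚ) + 1) ^ 2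


lemma Hq_succ (n : ℕ) : Hq (n+1) = Hq n + 1/(n+1) := by
  simp [Hq, Finset.sum_range_succ]

lemma Hq_zero : Hq 0 = 0 := by simp [Hq]

lemma choose_ne (n k : ℕ) (h : k ≤ n) : ((n.choose k : ℚ)) ≠ 0 :=
  Nat.cast_ne_zero.mpr (Nat.choose_pos h).ne'

lemma sum_Icc_one (n : ℕ) (f : ℕ → ℚ) : ∑ k ∈ Icc 1 n, f k = ∑ i ∈ range n, f (i+1) := by
  rw [← Finset.Ico_add_one_right_eq_Icc, Finset.sum_Ico_eq_sum_range]
  simp [add_comm]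

lemma sum_range_one' (n : ℕ) (f : ℕ → ℚ) :
    ∑ k ∈ range (n+1), f k = f 0 + ∑ k ∈ Icc 1 n, f k := by
  rw [sum_Icc_one, Finset.sum_range_succ' f n]; ring

lemma neg_one_pow_sub (j n : ℕ) (h : j ≤ n) : (-1:ℚ)^(n-j) = (-1)^n * (-1)^j := by
  have h3 : (-1:ℚ)^j * (-1)^j = 1 := by
    rw [← pow_add, ← two_mul, pow_mul]; norm_num
  have h2 : (-1:ℚ)^(n-j) * (-1)^j = (-1)^n := by rw [← pow_add, Nat.sub_add_cancel h]
  calc (-1:ℚ)^(n-j) = (-1:ℚ)^(n-j) * ((-1)^j * (-1)^j) := by rw [h3, mul_one]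
    _ = ((-1:ℚ)^(n-j) * (-1)^j) * (-1)^j := by ring
    _ = (-1)^n * (-1)^j := by rw [h2]

lemma alt_choose_full (n : ℕ) (hn : 0 < n) :
    ∑ k ∈ range (n+1), (-1:ℚ)^k * (n.choose k : ℚ) = 0 := by
  have h := Int.alternating_sum_range_choose (n := n)
  rw [if_neg hn.ne'] at h
  have h2 : ((∑ m ∈ range (n + 1), (-1:ℤ) ^ m * (n.choose m : ℤ) : ℤ) : ℚ) = 0 := by
    rw [h]; norm_num
  push_cast at h2
  exact h2

lemma alt_choose_Icc (n : ℕ) (hn : 0 < n) :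
    ∑ k ∈ Icc 1 n, (-1:ℚ)^k * (n.choose k : ℚ) = -1 := by
  have h := alt_choose_full n hn
  rw [sum_range_one' n (fun k => (-1:ℚ)^k * (n.choose k : ℚ))] at h
  simp at h
  linarith

lemma alt_choose_H (n : ℕ) (hn : 0 < n) :
    ∑ k ∈ range (n+1), (-1:ℚ)^k * (n.choose k : ℚ) * Hq k = -1/n := by
  induction n, hn using Nat.le_induction with
  | base => simp [Finset.sum_range_succ, Hq_succ, Hq_zero]
  | succ n hn ih =>
    rw [Finset.sum_range_succ' _ (n+1)]
    have e1 : ∀ j ∈ range (n+1), ((-1:ℚ))^(j+1) * (((n+1).choose (j+1) : ℕ) : ℚ) * Hq (j+1) =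
        (-1)^(j+1) * ((n.choose (j+1) : ℕ) : ℚ) * Hq (j+1)
        + (-((-1)^j * ((n.choose j : ℕ) : ℚ) * Hq j))
        + (-((-1)^j * (((n.choose j : ℕ) : ℚ)/(j+1)))) := by
      intro j hj
      have hp : (((n+1).choose (j+1) : ℕ) : ℚ) = ((n.choose j : ℕ) : ℚ) + ((n.choose (j+1) : ℕ) : ℚ) := by
        push_cast [Nat.choose_succ_succ]; ring
      rw [hp, Hq_succ, pow_succ]
      have hj1 : ((j:ℚ)+1) ≠ 0 := by positivity
      field_simp
      ring
    rw [Finset.sum_congr rfl e1, Finset.sum_add_distrib, Finset.sum_add_distrib]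
    have T1 : ∑ j ∈ range (n+1), (-1:ℚ)^(j+1) * ((n.choose (j+1) : ℕ) : ℚ) * Hq (j+1) = -1/n := by
      have h2 : ∑ k ∈ range (n+2), (-1:ℚ)^k * ((n.choose k : ℕ) : ℚ) * Hq k = -1/n := by
        rw [Finset.sum_range_succ]
        simp [Nat.choose_succ_self_right, Nat.choose_eq_zero_of_lt (Nat.lt_succ_self n)]
        exact ih
      rw [Finset.sum_range_succ' _ (n+1)] at h2
      simpa [Hq_zero] using h2
    have T2 : ∑ j ∈ range (n+1), -((-1:ℚ)^j * ((n.choose j : ℕ) : ℚ) * Hq j) = 1/n := by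
      rw [Finset.sum_neg_distrib, ih]; ring
    have T3 : ∑ j ∈ range (n+1), -((-1:ℚ)^j * (((n.choose j : ℕ) : ℚ)/(j+1))) = -1/(n+1) := by
      have e2 : ∀ j ∈ range (n+1), -((-1:ℚ)^j * (((n.choose j : ℕ) : ℚ)/(j+1)))
          = (-1)^(j+1) * (((n+1).choose (j+1) : ℕ) : ℚ) * (1/(n+1)) := by
        intro j hj
        have h3 := Nat.add_one_mul_choose_eq n j
        have h4 : ((n:ℚ)+1) * ((n.choose j : ℕ) : ℚ) = (((n+1).choose (j+1) : ℕ) : ℚ) * ((j:ℚ)+1) := by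
          exact_mod_cast congrArg (Nat.cast : ℕ → ℚ) h3
        have hj1 : ((j:ℚ)+1) ≠ 0 := by positivity
        have hn1 : ((n:ℚ)+1) ≠ 0 := by positivity
        rw [pow_succ]
        field_simp
        linear_combination (-1:ℚ) * h4
      rw [Finset.sum_congr rfl e2]
      rw [← Finset.sum_mul]
      have h5 : ∑ j ∈ range (n+1), (-1:ℚ)^(j+1) * (((n+1).choose (j+1) : ℕ) : ℚ) = -1 := by
        rw [← sum_Icc_one (n+1) (fun k => (-1:ℚ)^k * (((n+1).choose k : ℕ) : ℚ))]
        exact alt_choose_Icc (n+1) (Nat.succ_pos n)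
      rw [h5]; ring
    rw [T1, T2, T3]
    have hn0 : (n:ℚ) ≠ 0 := Nat.cast_ne_zero.mpr (Nat.one_le_iff_ne_zero.mp hn)
    have hn1 : ((n:ℚ)+1) ≠ 0 := by positivity
    simp [Hq_zero]
    field_simp
    ring

lemma alt_choose_H_rev (n : ℕ) (hn : 0 < n) :
    ∑ k ∈ Icc 1 n, (-(-1:ℚ)^k) * (n.choose k : ℚ) * Hq (n-k) = Hq n + (-1)^n/n := by
  have h0 : ∑ k ∈ range (n+1), (-1:ℚ)^k * (n.choose k : ℚ) * Hq (n - k)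
      = (-1)^n * (-1/n) := by
    rw [← (Finset.sum_range_reflect (fun k => (-1:ℚ)^k * (n.choose k : ℚ) * Hq (n-k)) (n+1))]
    have e : ∀ j ∈ range (n+1),
        (-1:ℚ)^(n+1-1-j) * (n.choose (n+1-1-j) : ℚ) * Hq (n - (n+1-1-j))
        = (-1)^n * ((-1)^j * (n.choose j : ℚ) * Hq j) := by
      intro j hj
      have hj' : j ≤ n := Nat.lt_succ_iff.mp (Finset.mem_range.mp hj)
      have h1 : n + 1 - 1 - j = n - j := by omega
      rw [h1, neg_one_pow_sub j n hj', Nat.choose_symm hj', Nat.sub_sub_self hj']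
      ring
    rw [Finset.sum_congr rfl e, ← Finset.mul_sum, alt_choose_H n hn]
  rw [sum_range_one'] at h0
  simp only [pow_zero, Nat.choose_zero_right, Nat.cast_one, Nat.sub_zero, one_mul] at h0
  have h2 : ∑ k ∈ Icc 1 n, (-(-1:ℚ)^k) * (n.choose k : ℚ) * Hq (n-k)
      = -∑ k ∈ Icc 1 n, (-1:ℚ)^k * (n.choose k : ℚ) * Hq (n-k) := by
    rw [← Finset.sum_neg_distrib]
    exact Finset.sum_congr rfl (fun k _ => by ring)
  rw [h2]
  have : ∑ k ∈ Icc 1 n, (-1:ℚ)^k * (n.choose k : ℚ) * Hq (n-k) = (-1)^n * (-1/n) - Hq n := by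
    linarith
  rw [this]; ring

lemma alt_choose_div (n : ℕ) :
    ∑ k ∈ Icc 1 n, (-(-1:ℚ)^k) * (n.choose k : ℚ) / k = Hq n := by
  induction n with
  | zero => simp [Hq_zero]
  | succ n ih =>
    rw [sum_Icc_one]
    have e : ∀ j ∈ range (n+1), (-(-1:ℚ)^(j+1)) * (((n+1).choose (j+1) : ℕ) : ℚ) / (j+1)
        = (-(-1:ℚ)^(j+1)) * ((n.choose (j+1) : ℕ) : ℚ) / (j+1)
          + (-1)^j * (((n+1).choose (j+1) : ℕ) : ℚ) * (1/(n+1)) := by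
      intro j hj
      have hp : (((n+1).choose (j+1) : ℕ) : ℚ) = ((n.choose j : ℕ) : ℚ) + ((n.choose (j+1) : ℕ) : ℚ) := by
        push_cast [Nat.choose_succ_succ]; ring
      have h4 : ((n:ℚ)+1) * ((n.choose j : ℕ) : ℚ) = (((n+1).choose (j+1) : ℕ) : ℚ) * ((j:ℚ)+1) := by
        exact_mod_cast congrArg (Nat.cast : ℕ → ℚ) (Nat.add_one_mul_choose_eq n j)
      have hj1 : ((j:ℚ)+1) ≠ 0 := by positivity
      have hn1 : ((n:ℚ)+1) ≠ 0 := by positivity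
      have key : ((n.choose j : ℕ) : ℚ)/((j:ℚ)+1) = (((n+1).choose (j+1) : ℕ) : ℚ)/((n:ℚ)+1) := by
        rw [div_eq_div_iff hj1 hn1]; linarith [h4]
      calc (-(-1:ℚ)^(j+1)) * (((n+1).choose (j+1) : ℕ) : ℚ) / ((j:ℚ)+1)
          = (-(-1:ℚ)^(j+1)) * ((n.choose (j+1) : ℕ) : ℚ) / ((j:ℚ)+1)
            + (-1)^j * (((n.choose j : ℕ) : ℚ)/((j:ℚ)+1)) := by
            rw [hp, pow_succ]; ring
        _ = (-(-1:ℚ)^(j+1)) * ((n.choose (j+1) : ℕ) : ℚ) / ((j:ℚ)+1)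
            + (-1)^j * (((n+1).choose (j+1) : ℕ) : ℚ) * (1/((n:ℚ)+1)) := by
            rw [key]; ring
    push_cast
    rw [Finset.sum_congr rfl e, Finset.sum_add_distrib]
    have P1 : ∑ j ∈ range (n+1), (-(-1:ℚ)^(j+1)) * ((n.choose (j+1) : ℕ) : ℚ) / ((j:ℚ)+1) = Hq n := by
      rw [Finset.sum_range_succ]
      have hz : (-(-1:ℚ)^(n+1)) * ((n.choose (n+1) : ℕ) : ℚ) / ((n:ℚ)+1) = 0 := by
        simp [Nat.choose_eq_zero_of_lt (Nat.lt_succ_self n)]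
      rw [hz, add_zero]
      rw [sum_Icc_one] at ih
      push_cast at ih
      convert ih using 1
    have P2 : ∑ j ∈ range (n+1), (-1:ℚ)^j * (((n+1).choose (j+1) : ℕ) : ℚ) * (1/(n+1)) = 1/(n+1) := by
      have h5 : ∑ j ∈ range (n+1), (-1:ℚ)^j * (((n+1).choose (j+1) : ℕ) : ℚ) = 1 := by
        have h6 : ∑ j ∈ range (n+1), (-1:ℚ)^(j+1) * (((n+1).choose (j+1) : ℕ) : ℚ) = -1 := by
          rw [← sum_Icc_one (n+1) (fun k => (-1:ℚ)^k * (((n+1).choose k : ℕ) : ℚ))]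
          exact alt_choose_Icc (n+1) (Nat.succ_pos n)
        have h7 : ∑ j ∈ range (n+1), (-1:ℚ)^(j+1) * (((n+1).choose (j+1) : ℕ) : ℚ)
            = -∑ j ∈ range (n+1), (-1:ℚ)^j * (((n+1).choose (j+1) : ℕ) : ℚ) := by
          rw [← Finset.sum_neg_distrib]
          exact Finset.sum_congr rfl (fun j _ => by rw [pow_succ]; ring)
        linarith [h6, h7.symm]
      rw [← Finset.sum_mul, h5, one_mul]
    rw [P1, P2, Hq_succ]

lemma U_lemma (m : ℕ) :
    ∑ k ∈ Icc 1 m, (-1:ℚ)^k / (k * (m.choose k : ℚ)) = ((-1)^m - 1)/(m+1) := by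
  set s : ℕ → ℚ := fun k => (-1)^k / ((m+1) * (m.choose k : ℚ)) with hs
  have tel := Finset.sum_range_sub s m
  rw [sum_Icc_one]
  have e : ∀ i ∈ range m, (-1:ℚ)^(i+1) / (((i:ℚ)+1) * (m.choose (i+1) : ℚ)) = s (i+1) - s i := by
    intro i hi
    have hi' : i + 1 ≤ m := Finset.mem_range.mp hi
    have hii : i ≤ m := le_of_lt (Finset.mem_range.mp hi)
    have c1 := choose_ne m (i+1) hi'
    have c0 := choose_ne m i hii
    have h4 : ((m.choose (i+1) : ℕ) : ℚ) * ((i:ℚ)+1) = ((m.choose i : ℕ) : ℚ) * ((m:ℚ) - i) := by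
      have h5 := congrArg (Nat.cast : ℕ → ℚ) (Nat.choose_succ_right_eq m i)
      push_cast [Nat.cast_sub hii] at h5
      convert h5 using 2 <;> push_cast <;> ring
    have hi1 : ((i:ℚ)+1) ≠ 0 := by positivity
    have hm1 : ((m:ℚ)+1) ≠ 0 := by positivity
    have him : ((m:ℚ) - (i:ℚ)) ≠ 0 := by
      have : (i:ℚ) < (m:ℚ) := by exact_mod_cast (Finset.mem_range.mp hi)
      linarith
    have hc1 : ((m.choose (i+1) : ℕ) : ℚ) = ((m.choose i : ℕ) : ℚ) * ((m:ℚ)-(i:ℚ)) / ((i:ℚ)+1) := by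
      rw [eq_div_iff hi1]; linarith [h4]
    have key : (1:ℚ)/(((i:ℚ)+1) * (m.choose (i+1) : ℚ))
        = 1/(((m:ℚ)+1) * (m.choose (i+1) : ℚ)) + 1/(((m:ℚ)+1) * (m.choose i : ℚ)) := by
      rw [hc1]
      field_simp
      ring
    simp only [hs, pow_succ]
    linear_combination ((-1:ℚ)^i * (-1)) * key
  push_cast
  rw [Finset.sum_congr rfl e, tel]
  simp only [hs]
  simp [Nat.choose_self, Nat.choose_zero_right]
  ring

lemma DS (n : ℕ) :
    ∑ k ∈ Icc 1 (n+1), (-1:ℚ)^k / ((k:ℚ)^2 * ((n+1).choose k : ℚ))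
    = ∑ k ∈ Icc 1 n, (-1:ℚ)^k / ((k:ℚ)^2 * (n.choose k : ℚ))
      + (2*(-1)^(n+1) + 1)/((n:ℚ)+1)^2 := by
  rw [Finset.sum_Icc_succ_top (by omega : 1 ≤ n+1)]
  have e : ∀ k ∈ Icc 1 n, (-1:ℚ)^k / ((k:ℚ)^2 * ((n+1).choose k : ℚ))
      = (-1)^k / ((k:ℚ)^2 * (n.choose k : ℚ))
        - (1/((n:ℚ)+1)) * ((-1)^k / ((k:ℚ) * (n.choose k : ℚ))) := by
    intro k hk
    obtain ⟨hk1, hk2⟩ := Finset.mem_Icc.mp hk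
    have c0 := choose_ne n k hk2
    have c1 := choose_ne (n+1) k (le_trans hk2 (Nat.le_succ n))
    have hk0 : ((k:ℚ)) ≠ 0 := by
      have : (0:ℚ) < (k:ℚ) := by exact_mod_cast hk1
      linarith
    have hn1 : ((n:ℚ)+1) ≠ 0 := by positivity
    have hnk : ((n:ℚ)+1-(k:ℚ)) ≠ 0 := by
      have : (k:ℚ) ≤ (n:ℚ) := by exact_mod_cast hk2
      linarith
    have h4 : ((n.choose k : ℕ):ℚ) * ((n:ℚ)+1) = (((n+1).choose k : ℕ):ℚ) * ((n:ℚ)+1-(k:ℚ)) := by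
      have h5 := congrArg (Nat.cast : ℕ → ℚ) (Nat.choose_mul_succ_eq n k)
      push_cast [Nat.cast_sub (le_trans hk2 (Nat.le_succ n))] at h5
      convert h5 using 2 <;> push_cast <;> ring
    have hC1 : (((n+1).choose k : ℕ):ℚ) = ((n.choose k : ℕ):ℚ) * ((n:ℚ)+1) / ((n:ℚ)+1-(k:ℚ)) := by
      rw [eq_div_iff hnk]; linarith [h4]
    rw [hC1]
    field_simp
  rw [Finset.sum_congr rfl e, Finset.sum_sub_distrib, ← Finset.mul_sum, U_lemma n]
  simp only [Nat.choose_self, Nat.cast_one, mul_one]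
  push_cast
  have hn1 : ((n:ℚ)+1) ≠ 0 := by positivity
  field_simp
  ring

lemma DL (n : ℕ) :
    ∑ k ∈ Icc 1 (n+1), (-(-1:ℚ)^k) / k * ((n+1).choose k : ℚ) * Hq (n+1-k)
    = ∑ k ∈ Icc 1 n, (-(-1:ℚ)^k) / k * (n.choose k : ℚ) * Hq (n-k)
      + 2*Hq n/((n:ℚ)+1) + (2 + 2*(-1)^(n+1))/((n:ℚ)+1)^2 := by
  have hn1 : ((n:ℚ)+1) ≠ 0 := by positivity
  rw [sum_Icc_one]
  have e : ∀ i ∈ range (n+1),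
      (-(-1:ℚ)^(i+1)) / ((i+1 : ℕ) : ℚ) * (((n+1).choose (i+1) : ℕ) : ℚ) * Hq (n+1-(i+1))
      = (-(-1:ℚ)^(i+1)) / ((i:ℚ)+1) * ((n.choose (i+1) : ℕ) : ℚ) * Hq (n-i)
        + (1/((n:ℚ)+1)) * ((-(-1:ℚ)^(i+1)) * (((n+1).choose (i+1) : ℕ) : ℚ) * Hq (n-i)) := by
    intro i hi
    have hii : n+1-(i+1) = n-i := by omega
    have hp : (((n+1).choose (i+1) : ℕ) : ℚ) = ((n.choose i : ℕ) : ℚ) + ((n.choose (i+1) : ℕ) : ℚ) := by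
      push_cast [Nat.choose_succ_succ]; ring
    have h4 : ((n:ℚ)+1) * ((n.choose i : ℕ) : ℚ) = (((n+1).choose (i+1) : ℕ) : ℚ) * ((i:ℚ)+1) := by
      exact_mod_cast congrArg (Nat.cast : ℕ → ℚ) (Nat.add_one_mul_choose_eq n i)
    have hi1 : ((i:ℚ)+1) ≠ 0 := by positivity
    have key : ((n.choose i : ℕ) : ℚ)/((i:ℚ)+1) = (((n+1).choose (i+1) : ℕ) : ℚ)/((n:ℚ)+1) := by
      rw [div_eq_div_iff hi1 hn1]; linarith [h4]
    rw [hii]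
    push_cast
    calc (-(-1:ℚ)^(i+1)) / ((i:ℚ)+1) * (((n+1).choose (i+1) : ℕ) : ℚ) * Hq (n-i)
        = (-(-1:ℚ)^(i+1)) / ((i:ℚ)+1) * ((n.choose (i+1) : ℕ) : ℚ) * Hq (n-i)
          + (-(-1:ℚ)^(i+1)) * (((n.choose i : ℕ) : ℚ)/((i:ℚ)+1)) * Hq (n-i) := by
          rw [hp]; ring
      _ = _ := by rw [key]; ring
  rw [Finset.sum_congr rfl e, Finset.sum_add_distrib]
  -- T_b : second part
  have Tb : ∑ i ∈ range (n+1), (1/((n:ℚ)+1)) * ((-(-1:ℚ)^(i+1)) * (((n+1).choose (i+1) : ℕ) : ℚ) * Hq (n-i))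
      = (1/((n:ℚ)+1)) * (Hq (n+1) + (-1)^(n+1)/((n:ℚ)+1)) := by
    rw [← Finset.mul_sum]
    congr 1
    have := alt_choose_H_rev (n+1) (Nat.succ_pos n)
    rw [sum_Icc_one] at this
    push_cast at this ⊢
    exact this
  rw [Tb]
  -- T_a : first part
  have Ta : ∑ i ∈ range (n+1), (-(-1:ℚ)^(i+1)) / ((i:ℚ)+1) * ((n.choose (i+1) : ℕ) : ℚ) * Hq (n-i)
      = (∑ k ∈ Icc 1 n, (-(-1:ℚ)^k) / k * (n.choose k : ℚ) * Hq (n-k))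
        + (1/((n:ℚ)+1)) * (Hq n + (1+(-1)^(n+1))/((n:ℚ)+1)) := by
    rw [Finset.sum_range_succ]
    have hz : (-(-1:ℚ)^(n+1)) / ((n:ℚ)+1) * ((n.choose (n+1) : ℕ) : ℚ) * Hq (n-n) = 0 := by
      simp [Nat.choose_eq_zero_of_lt (Nat.lt_succ_self n)]
    rw [hz, add_zero]
    have e3 : ∀ i ∈ range n,
        (-(-1:ℚ)^(i+1)) / ((i:ℚ)+1) * ((n.choose (i+1) : ℕ) : ℚ) * Hq (n-i)
        = (-(-1:ℚ)^(i+1)) / ((i:ℚ)+1) * ((n.choose (i+1) : ℕ) : ℚ) * Hq (n-(i+1))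
          + (1/((n:ℚ)+1)) * ((-(-1:ℚ)^(i+1)) * ((n.choose (i+1) : ℕ) : ℚ) / ((i:ℚ)+1))
          + (1/((n:ℚ)+1)) * ((-(-1:ℚ)^(i+1)) * (((n+1).choose (i+1) : ℕ) : ℚ) / ((n:ℚ)+1)) := by
      intro i hi
      have hilt : i < n := Finset.mem_range.mp hi
      have hH : Hq (n-i) = Hq (n-(i+1)) + 1/(((n:ℚ))-(i:ℚ)) := by
        have h6 : n - i = (n-(i+1)) + 1 := by omega
        rw [h6, Hq_succ]
        congr 1
        push_cast [Nat.cast_sub (by omega : i+1 ≤ n)]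
        ring
      have hi1 : ((i:ℚ)+1) ≠ 0 := by positivity
      have hni : ((n:ℚ)-(i:ℚ)) ≠ 0 := by
        have : (i:ℚ) < (n:ℚ) := by exact_mod_cast hilt
        linarith
      have h7 : ((n.choose (i+1) : ℕ) : ℚ) * ((n:ℚ)+1) = (((n+1).choose (i+1) : ℕ) : ℚ) * ((n:ℚ)-(i:ℚ)) := by
        have h8 := congrArg (Nat.cast : ℕ → ℚ) (Nat.choose_mul_succ_eq n (i+1))
        push_cast [Nat.cast_sub (le_of_lt hilt)] at h8
        convert h8 using 2 <;> push_cast <;> ring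
      have key2 : ((n.choose (i+1) : ℕ) : ℚ) / ((n:ℚ)-(i:ℚ)) = (((n+1).choose (i+1) : ℕ) : ℚ) / ((n:ℚ)+1) := by
        rw [div_eq_div_iff hni hn1]; linarith [h7]
      rw [hH]
      calc (-(-1:ℚ)^(i+1)) / ((i:ℚ)+1) * ((n.choose (i+1) : ℕ) : ℚ) * (Hq (n-(i+1)) + 1/((n:ℚ)-(i:ℚ)))
          = (-(-1:ℚ)^(i+1)) / ((i:ℚ)+1) * ((n.choose (i+1) : ℕ) : ℚ) * Hq (n-(i+1))
            + (-(-1:ℚ)^(i+1)) * (((n.choose (i+1) : ℕ) : ℚ) / (((i:ℚ)+1) * ((n:ℚ)-(i:ℚ)))) := by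
            field_simp
            ring
        _ = _ := by
            have split : ((n.choose (i+1) : ℕ) : ℚ) / (((i:ℚ)+1) * ((n:ℚ)-(i:ℚ)))
                = (1/((n:ℚ)+1)) * (((n.choose (i+1) : ℕ) : ℚ) / ((i:ℚ)+1))
                  + (1/((n:ℚ)+1)) * (((n.choose (i+1) : ℕ) : ℚ) / ((n:ℚ)-(i:ℚ))) := by
              field_simp
              ring
            rw [split, key2]
            ring
    rw [Finset.sum_congr rfl e3, Finset.sum_add_distrib, Finset.sum_add_distrib]
    have Q1 : ∑ i ∈ range n, (-(-1:ℚ)^(i+1)) / ((i:ℚ)+1) * ((n.choose (i+1) : ℕ) : ℚ) * Hq (n-(i+1))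
        = ∑ k ∈ Icc 1 n, (-(-1:ℚ)^k) / k * (n.choose k : ℚ) * Hq (n-k) := by
      rw [sum_Icc_one]
      push_cast
      rfl
    have Q2 : ∑ i ∈ range n, (1/((n:ℚ)+1)) * ((-(-1:ℚ)^(i+1)) * ((n.choose (i+1) : ℕ) : ℚ) / ((i:ℚ)+1))
        = (1/((n:ℚ)+1)) * Hq n := by
      rw [← Finset.mul_sum]
      congr 1
      have := alt_choose_div n
      rw [sum_Icc_one] at this
      push_cast at this
      exact this
    have Q3 : ∑ i ∈ range n, (1/((n:ℚ)+1)) * ((-(-1:ℚ)^(i+1)) * (((n+1).choose (i+1) : ℕ) : ℚ) / ((n:ℚ)+1))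
        = (1/((n:ℚ)+1)) * ((1+(-1:ℚ)^(n+1)) / ((n:ℚ)+1)) := by
      have e4 : ∀ i ∈ range n, (1/((n:ℚ)+1)) * ((-(-1:ℚ)^(i+1)) * (((n+1).choose (i+1) : ℕ) : ℚ) / ((n:ℚ)+1))
          = ((-(-1:ℚ)^(i+1)) * (((n+1).choose (i+1) : ℕ) : ℚ)) * (1/(((n:ℚ)+1)*((n:ℚ)+1))) := by
        intro i hi; field_simp; try ring
      rw [Finset.sum_congr rfl e4, ← Finset.sum_mul]
      have h9 : ∑ i ∈ range n, (-(-1:ℚ)^(i+1)) * (((n+1).choose (i+1) : ℕ) : ℚ) = 1 + (-1)^(n+1) := by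
        have h10 := alt_choose_Icc (n+1) (Nat.succ_pos n)
        rw [sum_Icc_one] at h10
        rw [Finset.sum_range_succ] at h10
        have h11 : ∑ i ∈ range n, (-1:ℚ)^(i+1) * (((n+1).choose (i+1) : ℕ) : ℚ)
            = -1 - (-1)^(n+1) := by
          have : (((n+1).choose (n+1) : ℕ) : ℚ) = 1 := by simp
          rw [this] at h10
          linarith
        have h12 : ∑ i ∈ range n, (-(-1:ℚ)^(i+1)) * (((n+1).choose (i+1) : ℕ) : ℚ)
            = -∑ i ∈ range n, (-1:ℚ)^(i+1) * (((n+1).choose (i+1) : ℕ) : ℚ) := by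
          rw [← Finset.sum_neg_distrib]
          exact Finset.sum_congr rfl (fun i _ => by ring)
        rw [h12, h11]; ring
      rw [h9]
      field_simp
    rw [Q1, Q2, Q3]
    ring
  rw [Ta, Hq_succ]
  field_simp
  ring

theorem stmt_13 (n : ℕ) (hn : 0 < n) :
    ∑ k ∈ Finset.Icc 1 n, (-1 : ℚ) ^ (k - 1) / k * (Nat.choose n k : ℚ) * Hq (n - k) =
      Hq n ^ 2 + ∑ k ∈ Finset.Icc 1 n,
        (-1 : ℚ) ^ k / ((k : ℚ) ^ 2 * (Nat.choose n k : ℚ)) := by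
  have conv1 : ∀ m : ℕ, ∑ k ∈ Finset.Icc 1 m, (-1 : ℚ) ^ (k - 1) / k * (Nat.choose m k : ℚ) * Hq (m - k)
      = ∑ k ∈ Finset.Icc 1 m, (-(-1:ℚ)^k) / k * (Nat.choose m k : ℚ) * Hq (m - k) := by
    intro m
    refine Finset.sum_congr rfl (fun k hk => ?_)
    obtain ⟨hk1, _⟩ := Finset.mem_Icc.mp hk
    have h1 : k - 1 + 1 = k := Nat.succ_pred_eq_of_pos hk1
    have h2 : (-1:ℚ)^(k-1) = -(-1:ℚ)^k := by
      conv_rhs => rw [← h1]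
      rw [pow_succ]; ring
    rw [h2]
  rw [conv1]
  induction n, hn using Nat.le_induction with
  | base =>
    norm_num [Finset.Icc_self, Hq]
  | succ n hn ih =>
    rw [DL n, DS n, ih, Hq_succ]
    have hn1 : ((n:ℚ)+1) ≠ 0 := by positivity
    field_simp
    ring
end

section
/- For every positive integer n and every complex number x: ∑_{k=0}^{n} binom(n, k) · H_{n−k} · x^k = (1+x)^n · H_n − ∑_{k=1}^{n} (1/k) · x^k · (1+x)^{n−k}. (This is the denominator-cleared form of the paper's identity ∑_{k=0}^{n} binom(n,k) H_{n−k} x^k = (1+x)^n [H_n − ∑_{k=1}^{n} (1/k)(x/(1+x))^k].) -/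
/-- Generalized binomial coefficient `C(s,k) = s(s-1)⋯(s-k+1)/k!` for complex `s`. -/
noncomputable def genChoose (s : ℂ) (k : ℕ) : ℂ :=
  (∏ i ∈ Finset.range k, (s - i)) / (Nat.factorial k)

/-- The `n`-th harmonic number as a complex number. -/
noncomputable def Hc (n : ℕ) : ℂ := ∑ i ∈ Finset.range n, 1 / (i + 1)

/-- The `n`-th generalized harmonic number of order 2 as a complex number. -/
noncomputable def H2c (n : ℕ) : ℂ := ∑ i ∈ Finset.range n, 1 / ((i : ℂ) + 1) ^ 2

open Finset

lemma choose_ratio (n j : ℕ) (hj : j ≤ n) :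
    (n + 1 - j) * Nat.choose (n+1) j = (n+1) * Nat.choose n j := by
  have h1 := Nat.add_one_mul_choose_eq n (n - j)
  rw [Nat.choose_symm hj] at h1
  have h2 : Nat.choose (n+1) (n - j + 1) = Nat.choose (n+1) j := by
    rw [← Nat.choose_symm (by omega : n - j + 1 ≤ n + 1)]
    congr 1; omega
  rw [h2] at h1
  have h3 : n + 1 - j = n - j + 1 := by omega
  rw [h3, Nat.mul_comm]
  exact h1.symm

lemma Hc_succ (n : ℕ) : Hc (n+1) = Hc n + 1 / ((n : ℂ) + 1) := by
  simp [Hc, Finset.sum_range_succ]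

lemma binom_sum (n : ℕ) (x : ℂ) :
    ∑ j ∈ range (n+1), (Nat.choose (n+1) j : ℂ) * x ^ j = (1+x)^(n+1) - x^(n+1) := by
  have h := add_pow x 1 (n+1)
  simp only [one_pow, mul_one] at h
  rw [Finset.sum_range_succ] at h
  have h2 : (1+x)^(n+1) = (x+1)^(n+1) := by ring
  have hsum : ∑ j ∈ range (n+1), (Nat.choose (n+1) j : ℂ) * x ^ j
      = ∑ j ∈ range (n+1), x ^ j * (Nat.choose (n+1) j : ℂ) :=
    Finset.sum_congr rfl (fun j _ => mul_comm _ _)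
  rw [hsum, h2, h, Nat.choose_self]
  push_cast
  ring

lemma key (x : ℂ) (n : ℕ) :
    ∑ k ∈ Finset.range (n + 1), (Nat.choose n k : ℂ) * Hc (n - k) * x ^ k =
      (1 + x) ^ n * Hc n -
        ∑ k ∈ Finset.Icc 1 n, 1 / (k : ℂ) * x ^ k * (1 + x) ^ (n - k) := by
  induction n with
  | zero => simp [Hc]
  | succ n ih =>
    have hS : ∑ k ∈ range (n+1+1), ((n+1).choose k : ℂ) * Hc (n+1-k) * x^k
        = (1+x) * (∑ k ∈ range (n+1), (n.choose k : ℂ) * Hc (n-k) * x^k)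
          + 1/((n:ℂ)+1) * ((1+x)^(n+1) - x^(n+1)) := by
      rw [Finset.sum_range_succ']
      have e1 : ∀ i ∈ range (n+1), ((n+1).choose (i+1) : ℂ) * Hc (n+1-(i+1)) * x^(i+1)
          = (n.choose i : ℂ) * Hc (n-i) * x^i * x
            + (n.choose (i+1) : ℂ) * Hc (n+1-(i+1)) * x^(i+1) := by
        intro i _
        have h : n+1-(i+1) = n-i := by omega
        rw [h, Nat.choose_succ_succ]
        push_cast; ring
      rw [Finset.sum_congr rfl e1, Finset.sum_add_distrib, ← Finset.sum_mul]
      have e2 : ∑ i ∈ range (n+1), (n.choose (i+1) : ℂ) * Hc (n+1-(i+1)) * x^(i+1)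
          = (∑ j ∈ range (n+1), (n.choose j : ℂ) * Hc (n+1-j) * x^j)
            + (n.choose (n+1) : ℂ) * Hc (n+1-(n+1)) * x^(n+1)
            - (n.choose 0 : ℂ) * Hc (n+1-0) * x^0 := by
        have h := Finset.sum_range_succ' (fun j => (n.choose j : ℂ) * Hc (n+1-j) * x^j) (n+1)
        rw [Finset.sum_range_succ] at h
        linear_combination -h
      rw [e2]
      have e3 : (n.choose (n+1) : ℂ) = 0 := by
        simp [Nat.choose_eq_zero_of_lt]
      have hc : ∀ j ∈ range (n+1), (n.choose j : ℂ) * Hc (n+1-j) * x^j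
          = (n.choose j : ℂ) * Hc (n-j) * x^j
            + 1/((n:ℂ)+1) * (((n+1).choose j : ℂ) * x^j) := by
        intro j hj
        simp only [mem_range] at hj
        have hjn : j ≤ n := by omega
        have h1 : n+1-j = (n-j)+1 := by omega
        rw [h1, Hc_succ]
        have h2 := choose_ratio n j hjn
        rw [h1] at h2
        have h2' : (((n-j:ℕ):ℂ) + 1) * ((n+1).choose j : ℂ)
            = ((n:ℂ)+1) * (n.choose j : ℂ) := by exact_mod_cast h2
        have hne1 : ((n:ℂ)+1) ≠ 0 := Nat.cast_add_one_ne_zero n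
        have hne2 : (((n-j:ℕ):ℂ)+1) ≠ 0 := Nat.cast_add_one_ne_zero _
        have key2 : (n.choose j : ℂ) * (1/(((n-j:ℕ):ℂ)+1))
            = ((n+1).choose j : ℂ) * (1/((n:ℂ)+1)) := by
          rw [mul_one_div, mul_one_div, div_eq_div_iff hne2 hne1]
          linear_combination -h2'
        linear_combination x^j * key2
      have e4 : ∑ j ∈ range (n+1), (n.choose j : ℂ) * Hc (n+1-j) * x^j
          = (∑ j ∈ range (n+1), (n.choose j : ℂ) * Hc (n-j) * x^j)
            + 1/((n:ℂ)+1) * ((1+x)^(n+1) - x^(n+1)) := by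
        rw [Finset.sum_congr rfl hc, Finset.sum_add_distrib, ← Finset.mul_sum, binom_sum]
      rw [e4, e3]
      simp only [Nat.choose_zero_right, Nat.cast_one, pow_zero]
      ring
    have hIcc : ∑ k ∈ Icc 1 (n+1), 1/(k:ℂ) * x^k * (1+x)^(n+1-k)
        = (1+x) * ∑ k ∈ Icc 1 n, 1/(k:ℂ) * x^k * (1+x)^(n-k)
          + 1/((n:ℂ)+1) * x^(n+1) := by
      rw [Finset.sum_Icc_succ_top (by omega : 1 ≤ n+1)]
      have e5 : ∀ k ∈ Icc 1 n, 1/(k:ℂ)*x^k*(1+x)^(n+1-k)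
          = (1+x) * (1/(k:ℂ)*x^k*(1+x)^(n-k)) := by
        intro k hk
        simp only [mem_Icc] at hk
        have h : n+1-k = (n-k)+1 := by omega
        rw [h, pow_succ]; ring
      rw [Finset.sum_congr rfl e5, ← Finset.mul_sum]
      simp only [Nat.sub_self, pow_zero]
      push_cast
      ring
    rw [hS, ih, hIcc, Hc_succ]
    ring

theorem stmt_14 (n : ℕ) (hn : 0 < n) (x : ℂ) :
    ∑ k ∈ Finset.range (n + 1), (Nat.choose n k : ℂ) * Hc (n - k) * x ^ k =
      (1 + x) ^ n * Hc n -
        ∑ k ∈ Finset.Icc 1 n, 1 / (k : ℂ) * x ^ k * (1 + x) ^ (n - k) := by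
  exact key x n
end

section
/- For every positive integer n: ∑_{k=1}^{n} (-1)^k · H_k / (k · binom(n, k)) = (-1)^n · H_{n+1} / (n+1) + ∑_{k=1}^{n+1} (-1)^k / (k^2 · binom(n+1, k)), as an identity of rational numbers. -/
open Finset

lemma choose_ne_q {n k : ℕ} (hk : k ≤ n) : (n.choose k : ℚ) ≠ 0 := by
  exact_mod_cast (Nat.choose_pos hk).ne'

lemma cast1 {n k : ℕ} (hk : k ≤ n) :
    ((n+1).choose k : ℚ) * ((n:ℚ)+1-k) = (n.choose k : ℚ) * ((n:ℚ)+1) := by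
  have h := Nat.choose_mul_succ_eq n k
  have hk' : k ≤ n + 1 := hk.trans (Nat.le_succ n)
  have h2 : ((n.choose k : ℚ)) * ((n:ℚ)+1) = ((n+1).choose k : ℚ) * (((n+1-k : ℕ) : ℚ)) := by
    exact_mod_cast h
  rw [Nat.cast_sub hk'] at h2
  push_cast at h2
  linarith

lemma cast2 (n k : ℕ) :
    ((n+1).choose (k+1) : ℚ) * ((k:ℚ)+1) = (n.choose k : ℚ) * ((n:ℚ)+1) := by
  have h := Nat.add_one_mul_choose_eq n k
  have h2 : (((n:ℚ)+1)) * (n.choose k : ℚ) = ((n+1).choose (k+1) : ℚ) * ((k:ℚ)+1) := by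
    exact_mod_cast h
  linarith

lemma fold {n k : ℕ} (hk : k ≤ n) :
    (1:ℚ)/((n+1).choose k) + 1/((n+1).choose (k+1)) =
      ((n:ℚ)+2)/(((n:ℚ)+1) * (n.choose k)) := by
  have h0 : (n.choose k : ℚ) ≠ 0 := choose_ne_q hk
  have h1 : ((n+1).choose k : ℚ) ≠ 0 := choose_ne_q (hk.trans (Nat.le_succ n))
  have h2 : ((n+1).choose (k+1) : ℚ) ≠ 0 := choose_ne_q (Nat.succ_le_succ hk)
  have hn1 : ((n:ℚ)+1) ≠ 0 := by positivity
  field_simp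
  linear_combination (-1)*((((n+1).choose (k+1) : ℚ)) * cast1 hk + (((n+1).choose k : ℚ)) * cast2 n k)

lemma tel (f : ℕ → ℚ) (n : ℕ) :
    ∑ k ∈ Icc 1 n, (f k - f (k+1)) = f 1 - f (n+1) := by
  induction n with
  | zero => simp
  | succ m ih => rw [Finset.sum_Icc_succ_top (by omega), ih]; ring

lemma shift (f : ℕ → ℚ) (n : ℕ) : ∑ k ∈ Icc 1 n, f k = ∑ j ∈ range n, f (j+1) := by
  induction n with
  | zero => simp
  | succ m ih => rw [Finset.sum_Icc_succ_top (by omega), ih, Finset.sum_range_succ]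

lemma G_closed (n : ℕ) :
    ∑ k ∈ Icc 1 n, (-1:ℚ)^k / ((n.choose k : ℚ)) =
      ((n:ℚ)+1)/((n:ℚ)+2) * (-1:ℚ)^n - 1/((n:ℚ)+2) := by
  have hn1 : ((n:ℚ)+1) ≠ 0 := by positivity
  have hn2 : ((n:ℚ)+2) ≠ 0 := by positivity
  have key : ∀ k ∈ Icc 1 n, (-1:ℚ)^k / ((n.choose k : ℚ)) =
      (fun k => ((n:ℚ)+1)/((n:ℚ)+2) * ((-1:ℚ)^k / ((n+1).choose k))) k -
      (fun k => ((n:ℚ)+1)/((n:ℚ)+2) * ((-1:ℚ)^k / ((n+1).choose k))) (k+1) := by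
    intro k hk
    obtain ⟨hk1, hk2⟩ := Finset.mem_Icc.mp hk
    have h := fold hk2
    have h1 : ((n+1).choose k : ℚ) ≠ 0 := choose_ne_q (hk2.trans (Nat.le_succ n))
    have h2 : ((n+1).choose (k+1) : ℚ) ≠ 0 := choose_ne_q (Nat.succ_le_succ hk2)
    have h0 : (n.choose k : ℚ) ≠ 0 := choose_ne_q hk2
    simp only [pow_succ]
    have expand : ((n:ℚ)+1)/((n:ℚ)+2) * ((-1:ℚ)^k / ((n+1).choose k)) -
        ((n:ℚ)+1)/((n:ℚ)+2) * ((-1:ℚ)^k * (-1) / ((n+1).choose (k+1))) =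
        ((n:ℚ)+1)/((n:ℚ)+2) * (-1:ℚ)^k *
          ((1:ℚ)/((n+1).choose k) + 1/((n+1).choose (k+1))) := by ring
    rw [expand, h]
    field_simp
  rw [Finset.sum_congr rfl key, tel]
  simp only [Nat.choose_one_right, Nat.choose_self, pow_one, Nat.cast_add, Nat.cast_one,
    Nat.cast_ofNat, pow_succ]
  field_simp
  ring

lemma E_closed (n : ℕ) :
    ∑ k ∈ Icc 1 n, (-1:ℚ)^k / ((k:ℚ) * (n.choose k : ℚ)) = ((-1:ℚ)^n - 1)/((n:ℚ)+1) := by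
  cases n with
  | zero => simp
  | succ m =>
    have hm1 : ((m:ℚ)+1) ≠ 0 := by positivity
    have hm2 : ((m:ℚ)+2) ≠ 0 := by positivity
    rw [shift]
    push_cast
    have key : ∀ j ∈ range (m+1), (-1:ℚ)^(j+1) / (((j:ℚ)+1) * (((m+1).choose (j+1) : ℕ) : ℚ)) =
        (-(1/((m:ℚ)+1))) * ((-1:ℚ)^j / ((m.choose j : ℕ) : ℚ)) := by
      intro j hj
      have hj' : j ≤ m := Nat.lt_succ_iff.mp (Finset.mem_range.mp hj)
      have h2 := cast2 m j
      have hc : ((m.choose j : ℕ) : ℚ) ≠ 0 := choose_ne_q hj'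
      have hc2 : (((m+1).choose (j+1) : ℕ) : ℚ) ≠ 0 := choose_ne_q (Nat.succ_le_succ hj')
      have hj1 : ((j:ℚ)+1) ≠ 0 := by positivity
      rw [pow_succ]
      field_simp
      linear_combination h2
    calc ∑ j ∈ range (m+1), (-1:ℚ)^(j+1) / (((j:ℚ)+1) * (((m+1).choose (j+1) : ℕ) : ℚ))
        = ∑ j ∈ range (m+1), (-(1/((m:ℚ)+1))) * ((-1:ℚ)^j / ((m.choose j : ℕ) : ℚ)) :=
          Finset.sum_congr rfl key
      _ = (-(1/((m:ℚ)+1))) * ∑ j ∈ range (m+1), (-1:ℚ)^j / ((m.choose j : ℕ) : ℚ) := by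
          rw [Finset.mul_sum]
      _ = (-(1/((m:ℚ)+1))) * (1 + ∑ k ∈ Icc 1 m, (-1:ℚ)^k / ((m.choose k : ℕ) : ℚ)) := by
          congr 1
          rw [Finset.range_eq_Ico, Finset.sum_eq_sum_Ico_succ_bot (Nat.succ_pos m),
            Nat.succ_eq_add_one, Finset.Ico_add_one_right_eq_Icc]
          simp
      _ = ((-1:ℚ)^(m+1) - 1)/(((m:ℕ):ℚ)+1+1) := by
          rw [G_closed]
          rw [pow_succ]
          field_simp
          ring

lemma Csum_closed (n : ℕ) :
    ∑ k ∈ Icc 1 n, (-1:ℚ)^k * Hq k / ((n.choose k : ℕ) : ℚ) =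
      ((n:ℚ)+1)/((n:ℚ)+2) * ( ((-1:ℚ)^(n+1) - 1)/((n:ℚ)+2) + (-1:ℚ)^n * Hq (n+1) ) := by
  have hn1 : ((n:ℚ)+1) ≠ 0 := by positivity
  have hn2 : ((n:ℚ)+2) ≠ 0 := by positivity
  have key : ∀ k ∈ Icc 1 n, (-1:ℚ)^k * Hq k / ((n.choose k : ℕ) : ℚ) =
      ((fun k => ((n:ℚ)+1)/((n:ℚ)+2) * ((-1:ℚ)^k * Hq k / (((n+1).choose k : ℕ) : ℚ))) k -
       (fun k => ((n:ℚ)+1)/((n:ℚ)+2) * ((-1:ℚ)^k * Hq k / (((n+1).choose k : ℕ) : ℚ))) (k+1)) -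
      ((n:ℚ)+1)/((n:ℚ)+2) * ((-1:ℚ)^k / (((k:ℚ)+1) * (((n+1).choose (k+1) : ℕ) : ℚ))) := by
    intro k hk
    obtain ⟨hk1, hk2⟩ := Finset.mem_Icc.mp hk
    have h1 : (((n+1).choose k : ℕ) : ℚ) ≠ 0 := choose_ne_q (hk2.trans (Nat.le_succ n))
    have h2 : (((n+1).choose (k+1) : ℕ) : ℚ) ≠ 0 := choose_ne_q (Nat.succ_le_succ hk2)
    have h0 : ((n.choose k : ℕ) : ℚ) ≠ 0 := choose_ne_q hk2
    have hk1' : ((k:ℚ)+1) ≠ 0 := by positivity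
    have hH : Hq (k+1) = Hq k + 1/((k:ℚ)+1) := by
      rw [Hq, Hq, Finset.sum_range_succ]
    have expand : ((fun k => ((n:ℚ)+1)/((n:ℚ)+2) * ((-1:ℚ)^k * Hq k / (((n+1).choose k : ℕ) : ℚ))) k -
       (fun k => ((n:ℚ)+1)/((n:ℚ)+2) * ((-1:ℚ)^k * Hq k / (((n+1).choose k : ℕ) : ℚ))) (k+1)) =
        ((n:ℚ)+1)/((n:ℚ)+2) * ((-1:ℚ)^k * Hq k) *
          ((1:ℚ)/(((n+1).choose k : ℕ) : ℚ) + 1/(((n+1).choose (k+1) : ℕ) : ℚ)) +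
        ((n:ℚ)+1)/((n:ℚ)+2) * ((-1:ℚ)^k / (((k:ℚ)+1) * (((n+1).choose (k+1) : ℕ) : ℚ))) := by
      simp only [hH, pow_succ]
      field_simp
      ring
    rw [expand, fold hk2]
    field_simp
    ring
  rw [Finset.sum_congr rfl key, Finset.sum_sub_distrib, tel, ← Finset.mul_sum]
  have hrem : ∑ k ∈ Icc 1 n, (-1:ℚ)^k / (((k:ℚ)+1) * (((n+1).choose (k+1) : ℕ) : ℚ)) =
      -((((-1:ℚ)^(n+1) - 1)/((n:ℚ)+2)) + 1/((n:ℚ)+1)) := by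
    have hE := E_closed (n+1)
    rw [shift] at hE
    rw [Finset.sum_range_succ'] at hE
    have hF0 : (-1:ℚ)^(0+1) / (((0+1 : ℕ):ℚ) * (((n+1).choose (0+1) : ℕ) : ℚ)) = -(1/((n:ℚ)+1)) := by
      simp [Nat.choose_one_right]
      ring
    rw [shift]
    have h2 : ∑ j ∈ range n, (-1:ℚ) ^ (j + 1) / (((((j+1:ℕ)):ℚ) + 1) * (((n+1).choose (j+1+1) : ℕ) : ℚ)) =
        - ∑ k ∈ range n, (-1:ℚ) ^ (k + 1 + 1) / (((k:ℚ)+1+1) * (((n+1).choose (k+1+1) : ℕ) : ℚ)) := by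
      rw [← Finset.sum_neg_distrib]
      apply Finset.sum_congr rfl
      intro j _
      push_cast [pow_succ]
      ring
    have hS : ∑ k ∈ range n, (-1:ℚ) ^ (k + 1 + 1) / (((k:ℚ)+1+1) * (((n+1).choose (k+1+1) : ℕ) : ℚ)) =
        ((-1:ℚ)^(n+1) - 1)/((n:ℚ)+2) + 1/((n:ℚ)+1) := by
      rw [hF0] at hE
      push_cast at hE
      linear_combination hE
    rw [h2, hS]
  rw [hrem]
  have hq1 : Hq 1 = 1 := by simp [Hq]
  simp only [Nat.choose_one_right, Nat.choose_self, pow_one, Nat.cast_one, Nat.cast_add, hq1]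
  rw [pow_succ]
  field_simp
  ring

lemma Arec (n : ℕ) :
    ∑ k ∈ Icc 1 (n+1), (-1:ℚ)^k * Hq k / ((k:ℚ) * (((n+1).choose k : ℕ) : ℚ)) =
      ∑ k ∈ Icc 1 n, (-1:ℚ)^k * Hq k / ((k:ℚ) * ((n.choose k : ℕ) : ℚ))
      - (∑ k ∈ Icc 1 n, (-1:ℚ)^k * Hq k / ((n.choose k : ℕ) : ℚ)) / ((n:ℚ)+1)
      + (-1:ℚ)^(n+1) * Hq (n+1) / ((n:ℚ)+1) := by
  have hn1 : ((n:ℚ)+1) ≠ 0 := by positivity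
  rw [Finset.sum_Icc_succ_top (by omega)]
  have key : ∀ k ∈ Icc 1 n, (-1:ℚ)^k * Hq k / ((k:ℚ) * (((n+1).choose k : ℕ) : ℚ)) =
      (-1:ℚ)^k * Hq k / ((k:ℚ) * ((n.choose k : ℕ) : ℚ)) -
        ((-1:ℚ)^k * Hq k / ((n.choose k : ℕ) : ℚ)) / ((n:ℚ)+1) := by
    intro k hk
    obtain ⟨hk1, hk2⟩ := Finset.mem_Icc.mp hk
    have h1 := cast1 hk2
    have hA : (((n+1).choose k : ℕ) : ℚ) ≠ 0 := choose_ne_q (hk2.trans (Nat.le_succ n))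
    have hc : ((n.choose k : ℕ) : ℚ) ≠ 0 := choose_ne_q hk2
    have hkq : (k:ℚ) ≠ 0 := by
      have : (0:ℚ) < (k:ℚ) := by exact_mod_cast hk1
      linarith
    field_simp
    linear_combination (-Hq k) * h1
  rw [Finset.sum_congr rfl key, Finset.sum_sub_distrib, ← Finset.sum_div]
  simp only [Nat.choose_self, Nat.cast_one, mul_one, Nat.cast_add]

lemma Brec (n : ℕ) :
    ∑ k ∈ Icc 1 (n+1), (-1:ℚ)^k / ((k:ℚ)^2 * (((n+1).choose k : ℕ) : ℚ)) =
      ∑ k ∈ Icc 1 n, (-1:ℚ)^k / ((k:ℚ)^2 * ((n.choose k : ℕ) : ℚ))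
      - (((-1:ℚ)^n - 1)/((n:ℚ)+1)) / ((n:ℚ)+1)
      + (-1:ℚ)^(n+1) / ((n:ℚ)+1)^2 := by
  have hn1 : ((n:ℚ)+1) ≠ 0 := by positivity
  rw [Finset.sum_Icc_succ_top (by omega)]
  have key : ∀ k ∈ Icc 1 n, (-1:ℚ)^k / ((k:ℚ)^2 * (((n+1).choose k : ℕ) : ℚ)) =
      (-1:ℚ)^k / ((k:ℚ)^2 * ((n.choose k : ℕ) : ℚ)) -
        ((-1:ℚ)^k / ((k:ℚ) * ((n.choose k : ℕ) : ℚ))) / ((n:ℚ)+1) := by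
    intro k hk
    obtain ⟨hk1, hk2⟩ := Finset.mem_Icc.mp hk
    have h1 := cast1 hk2
    have hA : (((n+1).choose k : ℕ) : ℚ) ≠ 0 := choose_ne_q (hk2.trans (Nat.le_succ n))
    have hc : ((n.choose k : ℕ) : ℚ) ≠ 0 := choose_ne_q hk2
    have hkq : (k:ℚ) ≠ 0 := by
      have : (0:ℚ) < (k:ℚ) := by exact_mod_cast hk1
      linarith
    field_simp
    linear_combination (-1 : ℚ) * h1
  rw [Finset.sum_congr rfl key, Finset.sum_sub_distrib, ← Finset.sum_div, E_closed]
  simp only [Nat.choose_self, Nat.cast_one, mul_one, Nat.cast_add]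

theorem stmt_17 (n : ℕ) (hn : 0 < n) :
    ∑ k ∈ Finset.Icc 1 n, (-1 : ℚ) ^ k * Hq k / ((k : ℚ) * (Nat.choose n k : ℚ)) =
      (-1 : ℚ) ^ n * Hq (n + 1) / ((n : ℚ) + 1) +
        ∑ k ∈ Finset.Icc 1 (n + 1),
          (-1 : ℚ) ^ k / ((k : ℚ) ^ 2 * (Nat.choose (n + 1) k : ℚ)) := by
  clear hn
  induction n with
  | zero => norm_num [Hq]
  | succ m ih =>
    rw [Arec m, ih, Csum_closed m, Brec (m+1)]
    have hH : Hq (m+1+1) = Hq (m+1) + 1/((m:ℚ)+2) := by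
      rw [Hq, Hq, Finset.sum_range_succ]
      push_cast
      ring
    rw [hH]
    have h1 : ((m:ℚ)+1) ≠ 0 := by positivity
    have h2 : ((m:ℚ)+2) ≠ 0 := by positivity
    push_cast [pow_succ]
    field_simp
    ring
end
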